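/- For every Kepler solution r : I → ℝ³ and every t ∈ I with h(t) ≠ 0, the velocity is determined by the position, the angular momentum and the eccentricity vector through the formula ṙ(t) = μ · (h(t)/|h(t)|²) × (e(t) + r(t)/|r(t)|). -/

import Mathlib

open scoped InnerProductSpace

/-- Cross product in ℝ³ (modelled as `EuclideanSpace ℝ (Fin 3)`). -/
noncomputable def cross3 (a b : EuclideanSpace ℝ (Fin 3)) : EuclideanSpace ℝ (Fin 3) :=
  (WithLp.equiv 2 (Fin 3 → ℝ)).symm
    ![a 1 * b 2 - a 2 * b 1, a 2 * b 0 - a 0 * b 2, a 0 * b 1 - a 1 * b 0]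

/-- The vector (x, y, z) ∈ ℝ³. -/
noncomputable def v3 (x y z : ℝ) : EuclideanSpace ℝ (Fin 3) :=
  (WithLp.equiv 2 (Fin 3 → ℝ)).symm ![x, y, z]

/-- The purely algebraic identity behind the velocity formula:
`h × (b × h) = ‖h‖² b` when `h = a × b` (since then `⟨h, b⟩ = 0`). -/
lemma velocity_formula_key (a b w : EuclideanSpace ℝ (Fin 3)) (μ : ℝ) (hμ : μ ≠ 0)
    (hh : cross3 a b ≠ 0) :
    b = μ • cross3 ((‖cross3 a b‖ ^ 2)⁻¹ • cross3 a b)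
        ((μ⁻¹ • cross3 b (cross3 a b) - w) + w) := by
  have hn : ‖cross3 a b‖ ^ 2 =
      (a 1 * b 2 - a 2 * b 1)^2 + (a 2 * b 0 - a 0 * b 2)^2 + (a 0 * b 1 - a 1 * b 0)^2 := by
    rw [EuclideanSpace.norm_eq, Real.sq_sqrt (by positivity)]
    simp [cross3, Fin.sum_univ_three, sq_abs, pow_two]
  have hpos : (a 1 * b 2 - a 2 * b 1)^2 + (a 2 * b 0 - a 0 * b 2)^2
      + (a 0 * b 1 - a 1 * b 0)^2 ≠ 0 := by
    rw [← hn]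
    have := norm_pos_iff.2 hh
    positivity
  rw [sub_add_cancel, hn]
  ext i
  fin_cases i <;>
    · simp only [cross3, PiLp.smul_apply, WithLp.equiv_symm_apply, PiLp.toLp_apply, smul_eq_mul,
        Matrix.cons_val_zero, Matrix.cons_val_one, Matrix.head_cons, Matrix.cons_val_two,
        Matrix.tail_cons, Fin.isValue, Fin.reduceFinMk]
      generalize hD : (_ + _ + _ : ℝ) = D at hpos ⊢
      field_simp
      subst hD
      ring

/-- For every Kepler solution and every t ∈ I with h(t) ≠ 0, the velocity satisfies
ṙ(t) = μ · (h(t)/|h(t)|²) × (e(t) + r(t)/|r(t)|). -/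
theorem velocity_formula
(μ : ℝ) (hμ : 0 < μ) (I : Set ℝ) (hIopen : IsOpen I) (hIconn : I.OrdConnected)
    (r : ℝ → EuclideanSpace ℝ (Fin 3))
    (hdiff : ∀ t ∈ I, DifferentiableAt ℝ r t)
    (hdiff' : ∀ t ∈ I, DifferentiableAt ℝ (deriv r) t)
    (hne : ∀ t ∈ I, r t ≠ 0)
    (hode : ∀ t ∈ I, deriv (deriv r) t = -(μ / ‖r t‖ ^ 3) • r t)
    (t : ℝ) (ht : t ∈ I) (hh : cross3 (r t) (deriv r t) ≠ 0) :
    deriv r t =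
      μ • cross3 ((‖cross3 (r t) (deriv r t)‖ ^ 2)⁻¹ • cross3 (r t) (deriv r t))
        ((μ⁻¹ • cross3 (deriv r t) (cross3 (r t) (deriv r t)) - ‖r t‖⁻¹ • r t) +
          ‖r t‖⁻¹ • r t) := by
  exact velocity_formula_key (r t) (deriv r t) (‖r t‖⁻¹ • r t) μ hμ.ne' hh
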